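/- There exists a threshold model (A, N, B_0, θ) such that the non-inflating update rule produces a 2-cycle: B_0 = B_2 ≠ B_1. Hence the non-inflating dynamics need not reach a fixed point. -/
import Mathlib


open Finset
open scoped Classical

variable {α : Type*}

noncomputable def nbhd [Fintype α] (N : α → α → Prop) (a : α) : Finset α :=
  Finset.univ.filter (fun b => N a b)

noncomputable def frac [Fintype α] (N : α → α → Prop) (B : Finset α) (a : α) : ℝ :=
  ((nbhd N a ∩ B).card : ℝ) / ((nbhd N a).card : ℝ)

noncomputable def infl [Fintype α] (N : α → α → Prop) (θ : ℝ) (B : Finset α) : Finset α :=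
  B ∪ Finset.univ.filter (fun a => θ ≤ frac N B a)

noncomputable def noninfl [Fintype α] (N : α → α → Prop) (θ : ℝ) (B : Finset α) : Finset α :=
  Finset.univ.filter (fun a => θ < frac N B a) ∪
    Finset.univ.filter (fun a => frac N B a = θ ∧ a ∈ B)

lemma nb0 : nbhd (fun a b : Fin 2 => a ≠ b) 0 = {1} := by
  ext x; fin_cases x <;> simp [nbhd]

lemma nb1 : nbhd (fun a b : Fin 2 => a ≠ b) 1 = {0} := by
  ext x; fin_cases x <;> simp [nbhd]

lemma step01 : noninfl (fun a b : Fin 2 => a ≠ b) (1/2) ({0} : Finset (Fin 2)) = {1} := by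
  ext x
  fin_cases x <;> simp [noninfl, frac, nb0, nb1] <;> norm_num

lemma step10 : noninfl (fun a b : Fin 2 => a ≠ b) (1/2) ({1} : Finset (Fin 2)) = {0} := by
  ext x
  fin_cases x <;> simp [noninfl, frac, nb0, nb1] <;> norm_num

/-- there is a threshold model on which the non-inflating update
rule produces a 2-cycle: `B 0 = B 2 ≠ B 1`. -/
theorem noninflating_two_cycle :
    ∃ (n : ℕ) (N : Fin n → Fin n → Prop) (B0 : Finset (Fin n)) (θ : ℝ),
      (∀ a, ¬ N a a) ∧ (∀ a b, N a b → N b a) ∧ 0 ≤ θ ∧ θ ≤ 1 ∧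
      noninfl N θ (noninfl N θ B0) = B0 ∧ noninfl N θ B0 ≠ B0 := by
  refine ⟨2, fun a b => a ≠ b, {0}, 1/2, fun a h => h rfl, fun a b h => h.symm,
    by norm_num, by norm_num, ?_, ?_⟩
  · rw [step01, step10]
  · rw [step01]; decide
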